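/- arXiv:1405.7007 — 3 statements merged into one kernel-verified Lean document; each statement's English description precedes it below -/
import Mathlib

section
/- Let ρ ≥ 2, v ∈ ℝ^d with |v| = 1, and A = I_d + (ρ-2)vv*. Let M, a₁, a₂ be symmetric positive definite d×d real matrices, and let ā > 0 be such that a₁ - ā·I_d and a₂ - ā·I_d are positive semidefinite. Then Tr[A((I_d - A⁻¹M)a₁ + (I_d - M⁻¹A)a₂)] ≤ ((1 ∨ (ρ-1))² / (4ā(1 ∧ (ρ-1)))) · Tr[(a₁ - a₂)²]. -/
open Matrix

set_option maxHeartbeats 1000000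

variable {d : ℕ}
local notation "Mat" => Matrix (Fin d) (Fin d) ℝ

noncomputable def Matrix.PosSemidef.sqrt {A : Mat} (hA : A.PosSemidef) : Mat :=
  (hA.1.eigenvectorUnitary : Mat) * Matrix.diagonal ((↑) ∘ Real.sqrt ∘ hA.1.eigenvalues : Fin d → ℝ)
    * star (hA.1.eigenvectorUnitary : Mat)

lemma Matrix.PosSemidef.posSemidef_sqrt {A : Mat} (hA : A.PosSemidef) : hA.sqrt.PosSemidef := by
  apply Matrix.PosSemidef.mul_mul_conjTranspose_same
  refine Matrix.posSemidef_diagonal_iff.mpr fun i => ?_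
  simp [Real.sqrt_nonneg]

lemma Matrix.PosSemidef.sqrt_mul_self {A : Mat} (hA : A.PosSemidef) : hA.sqrt * hA.sqrt = A := by
  have hU : star (hA.1.eigenvectorUnitary : Mat) * (hA.1.eigenvectorUnitary : Mat) = 1 :=
    (Matrix.mem_unitaryGroup_iff').mp (hA.1.eigenvectorUnitary).2
  have hD : Matrix.diagonal ((↑) ∘ Real.sqrt ∘ hA.1.eigenvalues : Fin d → ℝ)
      * Matrix.diagonal ((↑) ∘ Real.sqrt ∘ hA.1.eigenvalues : Fin d → ℝ)
      = Matrix.diagonal (RCLike.ofReal ∘ hA.1.eigenvalues) := by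
    rw [Matrix.diagonal_mul_diagonal]; congr 1; funext i
    simp [Real.mul_self_sqrt (hA.eigenvalues_nonneg i)]
  conv_rhs => rw [hA.1.spectral_theorem, Unitary.conjStarAlgAut_apply]
  simp only [Matrix.PosSemidef.sqrt, Matrix.mul_assoc]
  rw [← Matrix.mul_assoc (star (hA.1.eigenvectorUnitary : Mat)), hU, Matrix.one_mul,
    ← Matrix.mul_assoc (Matrix.diagonal _), hD]

lemma my_trace_nonneg {P : Mat} (hP : P.PosSemidef) : 0 ≤ P.trace := by
  rw [Matrix.trace]
  apply Finset.sum_nonneg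
  intro i _
  have := hP.dotProduct_mulVec_nonneg (Pi.single i 1)
  simpa [dotProduct, Matrix.mulVec, Pi.single_apply, Matrix.diag] using this

lemma my_trace_mul_nonneg {P Q : Mat} (hP : P.PosSemidef) (hQ : Q.PosSemidef) :
    0 ≤ (P * Q).trace := by
  have h2 : ((hQ.sqrt)ᴴ * P * hQ.sqrt).PosSemidef := hP.conjTranspose_mul_mul_same _
  have h3 := my_trace_nonneg h2
  rwa [hQ.posSemidef_sqrt.1, trace_mul_comm, ← Matrix.mul_assoc, hQ.sqrt_mul_self,
    trace_mul_comm] at h3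

lemma my_smul_psd {c : ℝ} (hc : 0 ≤ c) {P : Mat} (hP : P.PosSemidef) :
    (c • P).PosSemidef := by
  refine Matrix.PosSemidef.of_dotProduct_mulVec_nonneg ?_ fun x => ?_
  · unfold Matrix.IsHermitian
    rw [Matrix.conjTranspose_smul, hP.1]
    simp
  · rw [Matrix.smul_mulVec, dotProduct_smul]
    exact mul_nonneg hc (hP.dotProduct_mulVec_nonneg x)

lemma my_sqrt_lb {A : Mat} (hA : A.PosSemidef) {t : ℝ} (ht : 0 ≤ t)
    (h : (A - (t^2) • (1:Mat)).PosSemidef) : (hA.sqrt - t • (1:Mat)).PosSemidef := by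
  have hev : ∀ i, t^2 ≤ hA.1.eigenvalues i := by
    intro i
    set x : Fin d → ℝ := ⇑(hA.1.eigenvectorBasis i) with hxdef
    have hx : x ⬝ᵥ x = 1 := by
      have h1 : ‖hA.1.eigenvectorBasis i‖ = 1 := hA.1.eigenvectorBasis.orthonormal.1 i
      have h2 : (inner ℝ (hA.1.eigenvectorBasis i) (hA.1.eigenvectorBasis i) : ℝ) = 1 := by
        rw [real_inner_self_eq_norm_sq, h1]; norm_num
      rw [EuclideanSpace.inner_eq_star_dotProduct] at h2
      simpa using h2
    have h2 := h.dotProduct_mulVec_nonneg x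
    rw [star_trivial, Matrix.sub_mulVec, dotProduct_sub,
      hA.1.mulVec_eigenvectorBasis i, Matrix.smul_mulVec, Matrix.one_mulVec,
      dotProduct_smul, dotProduct_smul, hx] at h2
    simpa using h2
  set U : Mat := (hA.1.eigenvectorUnitary : Mat)
  have hU : U * star U = 1 := (Matrix.mem_unitaryGroup_iff).mp (hA.1.eigenvectorUnitary).2
  have key : hA.sqrt - t • (1:Mat)
      = U * (Matrix.diagonal (fun i => Real.sqrt (hA.1.eigenvalues i) - t)) * star U := by
    have hd : Matrix.diagonal (fun i => Real.sqrt (hA.1.eigenvalues i) - t)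
        = Matrix.diagonal ((↑) ∘ Real.sqrt ∘ hA.1.eigenvalues) - t • (1:Mat) := by
      rw [← Matrix.diagonal_one, ← Matrix.diagonal_smul, Matrix.diagonal_sub]
      congr 1
      funext i
      simp
    rw [hd, Matrix.mul_sub, Matrix.sub_mul, Matrix.mul_smul, Matrix.mul_one,
      Matrix.smul_mul, hU]
    rfl
  rw [key]
  refine Matrix.PosSemidef.mul_mul_conjTranspose_same ?_ U
  refine Matrix.posSemidef_diagonal_iff.mpr fun i => ?_
  have := hev i
  have h0 : 0 ≤ hA.1.eigenvalues i := hA.eigenvalues_nonneg i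
  nlinarith [Real.sq_sqrt h0, Real.sqrt_nonneg (hA.1.eigenvalues i)]

/-- Key lemma on pseudo-distances between matrices. -/
theorem stmt0 {d : ℕ} (ρ : ℝ) (hρ : 2 ≤ ρ) (v : Fin d → ℝ)
    (hv : ∑ i, v i ^ 2 = 1)
    (M a1 a2 : Matrix (Fin d) (Fin d) ℝ)
    (hM : M.PosDef) (ha1 : a1.PosDef) (ha2 : a2.PosDef)
    (abar : ℝ) (habar : 0 < abar)
    (h1 : (a1 - abar • (1 : Matrix (Fin d) (Fin d) ℝ)).PosSemidef)
    (h2 : (a2 - abar • (1 : Matrix (Fin d) (Fin d) ℝ)).PosSemidef) :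
    Matrix.trace ((1 + (ρ - 2) • Matrix.vecMulVec v v) *
        ((1 - (1 + (ρ - 2) • Matrix.vecMulVec v v)⁻¹ * M) * a1 +
         (1 - M⁻¹ * (1 + (ρ - 2) • Matrix.vecMulVec v v)) * a2)) ≤
      (max 1 (ρ - 1)) ^ 2 / (4 * abar * (min 1 (ρ - 1))) *
        Matrix.trace ((a1 - a2) ^ 2) := by
  have hρ1 : (1:ℝ) ≤ ρ - 1 := by linarith
  set A : Matrix (Fin d) (Fin d) ℝ := 1 + (ρ - 2) • Matrix.vecMulVec v v with hAdef
  -- basic facts about vecMulVec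
  have hvvH : (Matrix.vecMulVec v v).IsHermitian := by
    ext i j
    simp [Matrix.vecMulVec_apply, Matrix.conjTranspose_apply, mul_comm]
  have hvv_mulVec : ∀ x : Fin d → ℝ, Matrix.vecMulVec v v *ᵥ x = (v ⬝ᵥ x) • v := by
    intro x; ext i
    simp only [Matrix.mulVec, Matrix.vecMulVec_apply, dotProduct, Pi.smul_apply,
      smul_eq_mul, Finset.sum_mul, Finset.mul_sum]
    exact Finset.sum_congr rfl fun j _ => by ring
  have hvv : (Matrix.vecMulVec v v).PosSemidef := by
    refine Matrix.PosSemidef.of_dotProduct_mulVec_nonneg hvvH fun x => ?_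
    rw [star_trivial, hvv_mulVec, dotProduct_smul]
    rw [dotProduct_comm]
    exact mul_self_nonneg _
  have hIvv : ((1 : Matrix (Fin d) (Fin d) ℝ) - Matrix.vecMulVec v v).PosSemidef := by
    refine Matrix.PosSemidef.of_dotProduct_mulVec_nonneg (Matrix.isHermitian_one.sub hvvH) fun x => ?_
    rw [star_trivial, Matrix.sub_mulVec, dotProduct_sub, Matrix.one_mulVec,
      hvv_mulVec, dotProduct_smul, dotProduct_comm, smul_eq_mul]
    have hcs := Finset.sum_mul_sq_le_sq_mul_sq Finset.univ v x
    rw [hv, one_mul] at hcs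
    have e1 : v ⬝ᵥ x = ∑ i, v i * x i := rfl
    have e2 : x ⬝ᵥ x = ∑ i, x i ^ 2 := by
      simp [dotProduct, pow_two]
    have e3 : x ⬝ᵥ v = ∑ i, v i * x i := by
      simp [dotProduct, mul_comm]
    rw [e1, e2, e3]
    nlinarith [hcs]
  have hA_pd : A.PosDef :=
    Matrix.PosDef.add_posSemidef Matrix.PosDef.one (my_smul_psd (by linarith) hvv)
  have hAH : A.IsHermitian := hA_pd.1
  have hUB : ((ρ-1) • (1 : Matrix (Fin d) (Fin d) ℝ) - A).PosSemidef := by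
    have e : (ρ-1) • (1 : Matrix (Fin d) (Fin d) ℝ) - A
        = (ρ-2) • ((1 : Matrix (Fin d) (Fin d) ℝ) - Matrix.vecMulVec v v) := by
      rw [hAdef]
      module
    rw [e]
    exact my_smul_psd (by linarith) hIvv
  -- inverses
  have hAinv : A * A⁻¹ = 1 := Matrix.mul_nonsing_inv _ (isUnit_iff_ne_zero.mpr hA_pd.det_pos.ne')
  -- square roots
  set s1 : Matrix (Fin d) (Fin d) ℝ := ha1.posSemidef.sqrt with hs1def
  set s2 : Matrix (Fin d) (Fin d) ℝ := ha2.posSemidef.sqrt with hs2def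
  set N : Matrix (Fin d) (Fin d) ℝ := hM.posSemidef.sqrt with hNdef
  have hs1 : s1.PosSemidef := ha1.posSemidef.posSemidef_sqrt
  have hs2 : s2.PosSemidef := ha2.posSemidef.posSemidef_sqrt
  have hN : N.PosSemidef := hM.posSemidef.posSemidef_sqrt
  have hs1m : s1 * s1 = a1 := ha1.posSemidef.sqrt_mul_self
  have hs2m : s2 * s2 = a2 := ha2.posSemidef.sqrt_mul_self
  have hNm : N * N = M := hM.posSemidef.sqrt_mul_self
  have hNdet : IsUnit N.det := by
    apply isUnit_iff_ne_zero.mpr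
    intro h0
    have h := congrArg Matrix.det hNm
    rw [Matrix.det_mul, h0, mul_zero] at h
    exact absurd h.symm hM.det_pos.ne'
  have hNN : N * N⁻¹ = 1 := Matrix.mul_nonsing_inv _ hNdet
  have hNN' : N⁻¹ * N = 1 := Matrix.nonsing_inv_mul _ hNdet
  have hNiH : (N⁻¹)ᴴ = N⁻¹ := by rw [Matrix.conjTranspose_nonsing_inv, hN.1]
  have hMinvNN : M⁻¹ = N⁻¹ * N⁻¹ := by rw [← hNm, Matrix.mul_inv_rev]
  -- trace abbreviation
  set B : Matrix (Fin d) (Fin d) ℝ := a1 - a2 with hBdef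
  set S : Matrix (Fin d) (Fin d) ℝ := s1 - s2 with hSdef
  have hSH : S.IsHermitian := hs1.1.sub hs2.1
  have hBH : B.IsHermitian := ha1.1.sub ha2.1
  have hSS : (S * S).PosSemidef := by
    have := Matrix.posSemidef_conjTranspose_mul_self S
    rwa [hSH.eq] at this
  have hBB : 0 ≤ (B * B).trace := by
    have := Matrix.posSemidef_conjTranspose_mul_self B
    rw [hBH.eq] at this
    exact my_trace_nonneg this

  set c : ℝ := Real.sqrt abar with hcdef
  have hc : 0 < c := Real.sqrt_pos.mpr habar
  have hc2 : c^2 = abar := Real.sq_sqrt habar.le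
  have h1' : (s1 - c • 1).PosSemidef := my_sqrt_lb ha1.posSemidef hc.le (by rw [hc2]; exact h1)
  have h2' : (s2 - c • 1).PosSemidef := my_sqrt_lb ha2.posSemidef hc.le (by rw [hc2]; exact h2)
  clear_value A s1 s2 N c S B
  -- trace computations
  have t1 : Matrix.trace ((N*s1)ᴴ * (N*s1)) = Matrix.trace (M*a1) := by
    rw [Matrix.conjTranspose_mul, hs1.1, hN.1, trace_mul_comm]
    simp only [Matrix.mul_assoc]
    rw [← Matrix.mul_assoc s1 s1 N, hs1m, trace_mul_comm N (a1 * N), Matrix.mul_assoc,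
      hNm, trace_mul_comm]
  have t2 : Matrix.trace ((N⁻¹*(A*s2))ᴴ * (N⁻¹*(A*s2)))
      = Matrix.trace (A*(M⁻¹*(A*a2))) := by
    have e : (N⁻¹*(A*s2))ᴴ * (N⁻¹*(A*s2)) = s2 * (A * (M⁻¹ * (A * s2))) := by
      rw [Matrix.conjTranspose_mul, Matrix.conjTranspose_mul, hs2.1, hAH.eq, hNiH,
        hMinvNN]
      simp only [Matrix.mul_assoc]
    rw [e, trace_mul_comm]
    simp only [Matrix.mul_assoc]
    rw [hs2m]
  have t3 : Matrix.trace ((N*s1)ᴴ * (N⁻¹*(A*s2))) = Matrix.trace (s1*(A*s2)) := by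
    rw [Matrix.conjTranspose_mul, hs1.1, hN.1, Matrix.mul_assoc,
      ← Matrix.mul_assoc N N⁻¹ (A*s2), hNN, Matrix.one_mul]
  have swap : Matrix.trace (s2*(A*s1)) = Matrix.trace (s1*(A*s2)) := by
    have hconj : (s1*(A*s2))ᴴ = s2*(A*s1) := by
      rw [Matrix.conjTranspose_mul, Matrix.conjTranspose_mul, hs1.1, hs2.1, hAH.eq,
        Matrix.mul_assoc]
    rw [← hconj, Matrix.trace_conjTranspose, star_trivial]
  have t4 : Matrix.trace ((N⁻¹*(A*s2))ᴴ * (N*s1)) = Matrix.trace (s1*(A*s2)) := by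
    rw [Matrix.conjTranspose_mul, Matrix.conjTranspose_mul, hs2.1, hAH.eq, hNiH]
    have e : s2 * A * N⁻¹ * (N * s1) = s2 * (A * s1) := by
      simp only [Matrix.mul_assoc]
      rw [← Matrix.mul_assoc N⁻¹ N s1, hNN', Matrix.one_mul]
    rw [e, swap]
  have key1 : 2 * Matrix.trace (s1*(A*s2))
      ≤ Matrix.trace (M*a1) + Matrix.trace (A*(M⁻¹*(A*a2))) := by
    have h := my_trace_nonneg
      (Matrix.posSemidef_conjTranspose_mul_self (N*s1 - N⁻¹*(A*s2)))
    rw [Matrix.conjTranspose_sub, Matrix.sub_mul, Matrix.mul_sub, Matrix.mul_sub,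
      Matrix.trace_sub, Matrix.trace_sub, Matrix.trace_sub, t1, t2, t3, t4] at h
    linarith
  have e_lhs : Matrix.trace (A * ((1 - A⁻¹*M)*a1 + (1 - M⁻¹*A)*a2))
      = Matrix.trace (A*a1) + Matrix.trace (A*a2) - Matrix.trace (M*a1)
        - Matrix.trace (A*(M⁻¹*(A*a2))) := by
    have em : A * ((1 - A⁻¹*M)*a1 + (1 - M⁻¹*A)*a2)
        = A*a1 + A*a2 - (A*A⁻¹)*(M*a1) - A*(M⁻¹*(A*a2)) := by noncomm_ring
    rw [em, hAinv, Matrix.one_mul, Matrix.trace_sub, Matrix.trace_sub, Matrix.trace_add]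
  have e_AS : Matrix.trace (A*(S*S))
      = Matrix.trace (A*a1) + Matrix.trace (A*a2) - 2 * Matrix.trace (s1*(A*s2)) := by
    have em2 : A*(S*S) = A*(s1*s1) + A*(s2*s2) - A*(s1*s2) - A*(s2*s1) := by
      rw [hSdef]; noncomm_ring
    have c1 : Matrix.trace (A*(s2*s1)) = Matrix.trace (s1*(A*s2)) := by
      rw [← Matrix.mul_assoc, trace_mul_comm]
    have c2 : Matrix.trace (A*(s1*s2)) = Matrix.trace (s1*(A*s2)) := by
      rw [← Matrix.mul_assoc, trace_mul_comm (A*s1) s2]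
      exact swap
    rw [em2, hs1m, hs2m, Matrix.trace_sub, Matrix.trace_sub, Matrix.trace_add, c1, c2]
    ring
  have key2 : Matrix.trace (A*(S*S)) ≤ (ρ-1) * Matrix.trace (S*S) := by
    have h := my_trace_mul_nonneg hUB hSS
    rw [Matrix.sub_mul, Matrix.smul_mul, Matrix.one_mul, Matrix.trace_sub,
      Matrix.trace_smul] at h
    simp only [smul_eq_mul] at h
    linarith
  -- key3
  have lower1 : c * Matrix.trace (S*S) ≤ Matrix.trace (s1*(S*S)) := by
    have h := my_trace_mul_nonneg h1' hSS
    rw [Matrix.sub_mul, Matrix.smul_mul, Matrix.one_mul, Matrix.trace_sub,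
      Matrix.trace_smul] at h
    simp only [smul_eq_mul] at h
    linarith
  have lower2 : c * Matrix.trace (S*S) ≤ Matrix.trace (s2*(S*S)) := by
    have h := my_trace_mul_nonneg h2' hSS
    rw [Matrix.sub_mul, Matrix.smul_mul, Matrix.one_mul, Matrix.trace_sub,
      Matrix.trace_smul] at h
    simp only [smul_eq_mul] at h
    linarith
  have eSB : Matrix.trace (S*B) = Matrix.trace (s1*(S*S)) + Matrix.trace (s2*(S*S)) := by
    have e : S*B = S*(s1*S) + (S*S)*s2 := by
      rw [hSdef, hBdef, ← hs1m, ← hs2m]; noncomm_ring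
    rw [e, Matrix.trace_add, trace_mul_comm S (s1*S), Matrix.mul_assoc,
      trace_mul_comm (S*S) s2]
  have young : Matrix.trace (S*B) * c
      ≤ c^2 * Matrix.trace (S*S) + (1/4) * Matrix.trace (B*B) := by
    have hX := my_trace_nonneg
      (Matrix.posSemidef_conjTranspose_mul_self (c • S - (1/2 : ℝ) • B))
    have hXH : (c • S - (1/2 : ℝ) • B)ᴴ = c • S - (1/2 : ℝ) • B := by
      rw [Matrix.conjTranspose_sub, Matrix.conjTranspose_smul, Matrix.conjTranspose_smul,
        hSH.eq, hBH.eq, star_trivial, star_trivial]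
    rw [hXH, Matrix.sub_mul, Matrix.mul_sub, Matrix.mul_sub, Matrix.trace_sub,
      Matrix.trace_sub, Matrix.trace_sub] at hX
    simp only [Matrix.smul_mul, Matrix.mul_smul, smul_smul, Matrix.trace_smul,
      smul_eq_mul] at hX
    rw [trace_mul_comm B S] at hX
    nlinarith [hX]
  have hSSnn : 0 ≤ Matrix.trace (S*S) := my_trace_nonneg hSS
  have key3 : Matrix.trace (S*S) * (4 * abar) ≤ Matrix.trace (B*B) := by
    have h2c : 2 * c * Matrix.trace (S*S) ≤ Matrix.trace (S*B) := by
      rw [eSB]; linarith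
    have hmul := mul_le_mul_of_nonneg_right h2c hc.le
    have hcc : c * c = abar := by nlinarith [hc2]
    have e1 : 2 * c * Matrix.trace (S*S) * c = 2*(c*c)* Matrix.trace (S*S) := by ring
    rw [e1, hcc] at hmul
    have e2 : (c:ℝ)^2 = c*c := by ring
    rw [e2, hcc] at young
    linarith
  -- assemble
  rw [max_eq_right hρ1, min_eq_left hρ1, pow_two B, e_lhs]
  have hb4 : (0:ℝ) < 4 * abar := by linarith
  have step1 : Matrix.trace (A*a1) + Matrix.trace (A*a2) - Matrix.trace (M*a1)
      - Matrix.trace (A*(M⁻¹*(A*a2))) ≤ Matrix.trace (A*(S*S)) := by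
    rw [e_AS]; linarith
  have hconst : (ρ-1) * Matrix.trace (S*S)
      ≤ (ρ-1)^2 / (4*abar*1) * Matrix.trace (B*B) := by
    rw [mul_one, div_mul_eq_mul_div, le_div_iff₀ hb4]
    have hmono : (ρ-1) ≤ (ρ-1)^2 := by nlinarith [hρ1]
    have h5 : (ρ-1) * Matrix.trace (B*B) ≤ (ρ-1)^2 * Matrix.trace (B*B) :=
      mul_le_mul_of_nonneg_right hmono hBB
    have h6 := mul_le_mul_of_nonneg_left key3 (by linarith : (0:ℝ) ≤ ρ-1)
    linarith
  linarith
end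

section
/- Let ρ > 2, let r, K > 0, and let ψ : ℝ^d → ℝ be locally bounded with ψ(x) = sup_{y ∈ B(K)} (−|x−y|^ρ − ζ(y)) for all x in the closed ball B(r), where ζ : B(K) → ℝ is bounded. Then there exists a finite constant C_r such that x ↦ ψ(x) + C_r(|x|² + |x|^ρ) is convex on B(r). -/
/-- Tangent line lower bound for rpow: for `x, y ≥ 0`, `1 ≤ e`,
`y^e ≥ x^e + e x^(e-1) (y - x)` (with the convention issues at `x = 0` handled). -/
lemma tangent_rpow {x y e : ℝ} (hx : 0 ≤ x) (hy : 0 ≤ y) (he : 1 ≤ e) :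
    x ^ e + e * x ^ (e - 1) * (y - x) ≤ y ^ e := by
  rcases eq_or_lt_of_le hx with hx0 | hx0
  · -- x = 0
    rcases eq_or_lt_of_le he with he1 | he1
    · subst he1
      simp [← hx0, Real.rpow_one]
    · rw [← hx0, Real.zero_rpow (by positivity), Real.zero_rpow (by linarith)]
      have : (0:ℝ) ≤ y ^ e := Real.rpow_nonneg hy e
      linarith
  · have hs : (-1 : ℝ) ≤ y / x - 1 := by
      have : 0 ≤ y / x := div_nonneg hy hx0.le
      linarith
    have hb := one_add_mul_self_le_rpow_one_add hs he
    have h1 : (1 : ℝ) + (y / x - 1) = y / x := by ring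
    rw [h1] at hb
    have hxp : 0 < x ^ e := Real.rpow_pos_of_pos hx0 e
    have hdiv : (y / x) ^ e = y ^ e / x ^ e := Real.div_rpow hy hx0.le e
    rw [hdiv] at hb
    have hb2 : (1 + e * (y / x - 1)) * x ^ e ≤ y ^ e := by
      rw [← le_div_iff₀ hxp]
      linarith [hb]
    have hx1 : x ^ (e - 1) * x = x ^ e := by
      rw [← Real.rpow_add_one (ne_of_gt hx0)]
      ring_nf
    have hxy : x ^ (e-1) * y = (y / x) * x ^ e := by
      field_simp
      rw [mul_comm y, ← hx1]; ring
    calc x ^ e + e * x ^ (e - 1) * (y - x)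
        = (1 + e * (y / x - 1)) * x ^ e := by
          rw [mul_sub (e * x^(e-1))]
          rw [mul_assoc, hxy, mul_assoc, hx1]; ring
      _ ≤ y ^ e := hb2

lemma lip_rpow {R ρ α β : ℝ} (hρ : 2 ≤ ρ) (hα : 0 ≤ α) (hβ : 0 ≤ β) (hβR : β ≤ R)
    (hab : α ≤ β) :
    β ^ (ρ-1) - α ^ (ρ-1) ≤ (ρ-1) * R ^ (ρ-2) * (β - α) := by
  have ht := tangent_rpow hβ hα (by linarith : (1:ℝ) ≤ ρ - 1)
  have he : ρ - 1 - 1 = ρ - 2 := by ring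
  rw [he] at ht
  have hmono : β ^ (ρ-2) ≤ R ^ (ρ-2) := Real.rpow_le_rpow hβ hβR (by linarith)
  nlinarith [ht, hmono, sub_nonneg.2 hab, mul_le_mul_of_nonneg_right hmono (sub_nonneg.2 hab)]

lemma semiconcave_rpow {R ρ α β : ℝ} (hρ : 2 ≤ ρ) (hα : 0 ≤ α) (hαR : α ≤ R)
    (hβ : 0 ≤ β) (hβR : β ≤ R) :
    β ^ ρ ≤ α ^ ρ + ρ * α ^ (ρ-1) * (β - α) + ρ * (ρ-1) * R ^ (ρ-2) * (β - α)^2 := by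
  have h1 := tangent_rpow hβ hα (by linarith : (1:ℝ) ≤ ρ)
  -- h1 : β^ρ + ρ β^(ρ-1) (α - β) ≤ α^ρ
  have hρ1 : (0:ℝ) < ρ := by linarith
  have h2 : (β - α) * (β ^ (ρ-1) - α ^ (ρ-1)) ≤ (ρ-1) * R ^ (ρ-2) * (β - α)^2 := by
    rcases le_total α β with hab | hab
    · have := lip_rpow hρ hα hβ hβR hab
      nlinarith [sub_nonneg.2 hab]
    · have := lip_rpow hρ hβ hα hαR hab
      nlinarith [sub_nonneg.2 hab]
  nlinarith [h1, h2]

section VectorLemmas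

variable {E : Type*} [NormedAddCommGroup E] [InnerProductSpace ℝ E]

set_option maxHeartbeats 1000000 in
lemma key_ineq {ρ R : ℝ} (hρ : 2 < ρ) (hR : 0 < R) (x z y : E) {t u : ℝ}
    (ht : 0 ≤ t) (hu : 0 ≤ u) (htu : t + u = 1)
    (hxR : ‖x - y‖ ≤ R) (hzR : ‖z - y‖ ≤ R) :
    t * ‖x - y‖ ^ ρ + u * ‖z - y‖ ^ ρ - ‖t • x + u • z - y‖ ^ ρ
      ≤ ρ^2 * R^(ρ-2) * (t * u * ‖x - z‖^(2:ℕ)) := by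
  set A := ‖x - y‖ with hA
  set B := ‖z - y‖ with hB
  set W := ‖t • x + u • z - y‖ with hW
  set L := ‖x - z‖ with hL
  have hA0 : 0 ≤ A := norm_nonneg _
  have hB0 : 0 ≤ B := norm_nonneg _
  have hW0 : 0 ≤ W := norm_nonneg _
  have hL0 : 0 ≤ L := norm_nonneg _
  have hy : t • y + u • y = y := by rw [← add_smul, htu, one_smul]
  have f0 : t • x + u • z - y = t • (x - y) + u • (z - y) := by
    have h : t • (x - y) + u • (z - y) = t • x + u • z - (t • y + u • y) := by
      rw [smul_sub, smul_sub]; abel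
    rw [h, hy]
  have f1 : W ≤ t * A + u * B := by
    rw [hW, f0]
    calc ‖t • (x - y) + u • (z - y)‖ ≤ ‖t • (x - y)‖ + ‖u • (z - y)‖ := norm_add_le _ _
      _ = t * A + u * B := by
          rw [norm_smul, norm_smul, Real.norm_eq_abs, Real.norm_eq_abs,
            abs_of_nonneg ht, abs_of_nonneg hu]
  have htAB : 0 ≤ t * A + u * B := add_nonneg (mul_nonneg ht hA0) (mul_nonneg hu hB0)
  have fWR : W ≤ R := by nlinarith [f1]
  have f3 : |A - W| ≤ u * L := by
    have hxw : x - y - (t • x + u • z - y) = u • (x - z) := by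
      have hx1 : x = (t + u) • x := by rw [htu, one_smul]
      rw [smul_sub]
      nth_rewrite 1 [hx1]
      rw [add_smul]; abel
    calc |A - W| ≤ ‖(x - y) - (t • x + u • z - y)‖ := abs_norm_sub_norm_le _ _
      _ = ‖u • (x - z)‖ := by rw [hxw]
      _ = u * L := by rw [norm_smul, Real.norm_eq_abs, abs_of_nonneg hu]
  have f4 : |B - W| ≤ t * L := by
    have hzw : z - y - (t • x + u • z - y) = t • (z - x) := by
      have hz1 : z = (t + u) • z := by rw [htu, one_smul]
      rw [smul_sub]
      nth_rewrite 1 [hz1]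
      rw [add_smul]; abel
    calc |B - W| ≤ ‖(z - y) - (t • x + u • z - y)‖ := abs_norm_sub_norm_le _ _
      _ = ‖t • (z - x)‖ := by rw [hzw]
      _ = t * L := by
          rw [norm_smul, Real.norm_eq_abs, abs_of_nonneg ht, norm_sub_rev]
  have f5 : (t * A + u * B)^2 - W^2 ≤ t * u * L^2 := by
    have hW2 : W^2 = t^2 * A^2 + 2 * (t * u * (inner ℝ (x - y) (z - y) : ℝ)) + u^2 * B^2 := by
      rw [hW, f0, norm_add_sq_real, real_inner_smul_left, real_inner_smul_right,
        norm_smul, norm_smul, Real.norm_eq_abs, Real.norm_eq_abs,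
        abs_of_nonneg ht, abs_of_nonneg hu]
      ring
    have hL2 : L^2 = A^2 - 2 * (inner ℝ (x - y) (z - y) : ℝ) + B^2 := by
      have hxz : x - z = (x - y) - (z - y) := by abel
      rw [hL, hxz]
      exact norm_sub_sq_real _ _
    nlinarith [sq_nonneg (A - B), mul_nonneg ht hu]
  -- semiconcavity applications with base point W
  have sc1 := semiconcave_rpow (R := R) hρ.le hW0 fWR hA0 hxR
  have sc2 := semiconcave_rpow (R := R) hρ.le hW0 fWR hB0 hzR
  -- first order term bound
  have hδ0 : 0 ≤ t * A + u * B - W := by linarith [f1]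
  have hWδ : W * (t * A + u * B - W) ≤ t * u * L^2 := by
    nlinarith [f5, hδ0, hW0, mul_nonneg hδ0 htAB]
  have hWmono : W ^ (ρ-2) ≤ R ^ (ρ-2) := Real.rpow_le_rpow hW0 fWR (by linarith)
  have hRp : (0:ℝ) ≤ R^(ρ-2) := Real.rpow_nonneg hR.le _
  have bd1 : ρ * W ^ (ρ-1) * (t * A + u * B - W) ≤ ρ * R^(ρ-2) * (t * u * L^2) := by
    have hsplit : W ^ (ρ-1) * (t * A + u * B - W) ≤ R^(ρ-2) * (t * u * L^2) := by
      rcases eq_or_lt_of_le hW0 with h0 | h0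
      · rw [← h0, Real.zero_rpow (by intro h; rw [sub_eq_zero] at h; linarith : ρ - 1 ≠ 0)]
        rw [zero_mul]
        have h1 : (0:ℝ) ≤ t * u * L^2 := by positivity
        positivity
      · have hWe : W ^ (ρ-1) = W ^ (ρ-2) * W := by
          rw [← Real.rpow_add_one (ne_of_gt h0)]
          ring_nf
        rw [hWe, mul_assoc]
        exact mul_le_mul hWmono hWδ (mul_nonneg hW0 hδ0) hRp
    have := mul_le_mul_of_nonneg_left hsplit (by linarith : (0:ℝ) ≤ ρ)
    calc ρ * W ^ (ρ-1) * (t * A + u * B - W) = ρ * (W ^ (ρ-1) * (t * A + u * B - W)) := by ring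
      _ ≤ ρ * (R^(ρ-2) * (t * u * L^2)) := this
      _ = ρ * R^(ρ-2) * (t * u * L^2) := by ring
  -- second order term bound
  have bd2 : t * (A - W)^2 + u * (B - W)^2 ≤ t * u * L^2 := by
    have h3 : (A - W)^2 ≤ (u * L)^2 := by
      rw [← sq_abs (A - W)]
      exact pow_le_pow_left₀ (abs_nonneg _) f3 2
    have h4 : (B - W)^2 ≤ (t * L)^2 := by
      rw [← sq_abs (B - W)]
      exact pow_le_pow_left₀ (abs_nonneg _) f4 2
    nlinarith [mul_le_mul_of_nonneg_left h3 ht, mul_le_mul_of_nonneg_left h4 hu,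
      mul_nonneg (mul_nonneg ht hu) (sq_nonneg L)]
  have hD : 0 ≤ ρ * (ρ - 1) * R^(ρ-2) := by
    have h1 : (0:ℝ) ≤ ρ * (ρ - 1) := by nlinarith
    exact mul_nonneg h1 hRp
  have hcomb : t * A ^ ρ + u * B ^ ρ - W ^ ρ
      ≤ ρ * W ^ (ρ-1) * (t * A + u * B - W)
        + ρ * (ρ-1) * R^(ρ-2) * (t * (A - W)^2 + u * (B - W)^2) := by
    have h1 := mul_le_mul_of_nonneg_left sc1 ht
    have h2 := mul_le_mul_of_nonneg_left sc2 hu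
    have e3 : t * W^ρ + u * W^ρ = W^ρ := by linear_combination W^ρ * htu
    have e4 : t * (ρ * W^(ρ-1) * W) + u * (ρ * W^(ρ-1) * W) = ρ * W^(ρ-1) * W := by
      linear_combination (ρ * W^(ρ-1) * W) * htu
    linarith [h1, h2, e3, e4]
  have hfin : t * A ^ ρ + u * B ^ ρ - W ^ ρ
      ≤ ρ * R^(ρ-2) * (t * u * L^2) + ρ * (ρ-1) * R^(ρ-2) * (t * u * L^2) := by
    have h5 := mul_le_mul_of_nonneg_left bd2 hD
    linarith [hcomb, bd1, h5]
  calc t * A ^ ρ + u * B ^ ρ - W ^ ρ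
      ≤ ρ * R^(ρ-2) * (t * u * L^2) + ρ * (ρ-1) * R^(ρ-2) * (t * u * L^2) := hfin
    _ = ρ^2 * R^(ρ-2) * (t * u * L^2) := by ring

end VectorLemmas

lemma normsq_combo {E : Type*} [NormedAddCommGroup E] [InnerProductSpace ℝ E]
    (x z : E) {t u : ℝ} (htu : t + u = 1) :
    ‖t • x + u • z‖^(2:ℕ) = t * ‖x‖^(2:ℕ) + u * ‖z‖^(2:ℕ) - t * u * ‖x - z‖^(2:ℕ) := by
  have e1 : ‖t • x + u • z‖^(2:ℕ)
      = t^2 * ‖x‖^2 + 2 * (t * u * (inner ℝ x z : ℝ)) + u^2 * ‖z‖^2 := by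
    rw [norm_add_sq_real, real_inner_smul_left, real_inner_smul_right,
      norm_smul, norm_smul, Real.norm_eq_abs, Real.norm_eq_abs]
    rcases abs_cases t with ⟨h,_⟩ | ⟨h,_⟩ <;> rcases abs_cases u with ⟨h2,_⟩ | ⟨h2,_⟩ <;>
      rw [h, h2] <;> ring
  have e2 : ‖x - z‖^(2:ℕ) = ‖x‖^2 - 2 * (inner ℝ x z : ℝ) + ‖z‖^2 := norm_sub_sq_real x z
  linear_combination e1 + t*u*e2 + (t*‖x‖^2 + u*‖z‖^2) * htu

theorem stmt9 {d : ℕ} (ρ r K : ℝ) (hρ : 2 < ρ) (hr : 0 < r) (hK : 0 < K)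
    (ψ ζ : EuclideanSpace ℝ (Fin d) → ℝ)
    (hζ : ∃ Cζ : ℝ, ∀ y ∈ Metric.closedBall (0 : EuclideanSpace ℝ (Fin d)) K, |ζ y| ≤ Cζ)
    (hψ : ∀ x ∈ Metric.closedBall (0 : EuclideanSpace ℝ (Fin d)) r,
      ψ x = sSup ((fun y => -‖x - y‖ ^ ρ - ζ y) ''
        Metric.closedBall (0 : EuclideanSpace ℝ (Fin d)) K)) :
    ∃ Cr : ℝ, ConvexOn ℝ (Metric.closedBall (0 : EuclideanSpace ℝ (Fin d)) r)
      (fun x => ψ x + Cr * (‖x‖ ^ (2 : ℕ) + ‖x‖ ^ ρ)) := by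
  obtain ⟨Cζ, hCζ⟩ := hζ
  set R : ℝ := r + K with hRdef
  have hR : 0 < R := by positivity
  set C : ℝ := ρ^2 * R^(ρ-2) with hCdef
  have hC : 0 ≤ C := by
    have : (0:ℝ) ≤ R^(ρ-2) := Real.rpow_nonneg hR.le _
    positivity
  refine ⟨C, convex_closedBall _ _, ?_⟩
  intro x hx z hz t u ht hu htu
  set w : EuclideanSpace ℝ (Fin d) := t • x + u • z with hwdef
  have hw : w ∈ Metric.closedBall (0:EuclideanSpace ℝ (Fin d)) r := (convex_closedBall (0:EuclideanSpace ℝ (Fin d)) r) hx hz ht hu htu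
  have hnx : ‖x‖ ≤ r := mem_closedBall_zero_iff.mp hx
  have hnz : ‖z‖ ≤ r := mem_closedBall_zero_iff.mp hz
  -- bounded above of the defining sets
  have hbdd : ∀ v : EuclideanSpace ℝ (Fin d), BddAbove ((fun y => -‖v - y‖ ^ ρ - ζ y) ''
      Metric.closedBall (0:EuclideanSpace ℝ (Fin d)) K) := by
    intro v
    refine ⟨Cζ, ?_⟩
    rintro b ⟨y, hy, rfl⟩
    have h1 : (0:ℝ) ≤ ‖v - y‖ ^ ρ := Real.rpow_nonneg (norm_nonneg _) _
    have h2 : -ζ y ≤ Cζ := by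
      have := hCζ y hy
      have := abs_le.mp this
      linarith [this.1]
    simp only
    linarith
  -- the key convexity-defect estimate for ψ
  have hψw : ψ w ≤ t * ψ x + u * ψ z + C * (t * u * ‖x - z‖^(2:ℕ)) := by
    rw [hψ w hw]
    apply csSup_le
    · exact ⟨_, Set.mem_image_of_mem _ (Metric.mem_closedBall_self hK.le)⟩
    · rintro b ⟨y, hy, rfl⟩
      have hny : ‖y‖ ≤ K := mem_closedBall_zero_iff.mp hy
      have hxyR : ‖x - y‖ ≤ R := le_trans (norm_sub_le x y) (by rw [hRdef]; linarith)
      have hzyR : ‖z - y‖ ≤ R := le_trans (norm_sub_le z y) (by rw [hRdef]; linarith)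
      have key := key_ineq hρ hR x z y ht hu htu hxyR hzyR
      rw [← hwdef, ← hCdef] at key
      have m1 : t * (-‖x - y‖ ^ ρ - ζ y) ≤ t * ψ x := by
        apply mul_le_mul_of_nonneg_left _ ht
        rw [hψ x hx]
        exact le_csSup (hbdd x) ⟨y, hy, rfl⟩
      have m2 : u * (-‖z - y‖ ^ ρ - ζ y) ≤ u * ψ z := by
        apply mul_le_mul_of_nonneg_left _ hu
        rw [hψ z hz]
        exact le_csSup (hbdd z) ⟨y, hy, rfl⟩
      have eζ : t * ζ y + u * ζ y = ζ y := by linear_combination (ζ y) * htu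
      simp only
      linarith [key, m1, m2, eζ]
  -- convexity of the rpow of the norm
  have hwr : ‖w‖ ≤ t * ‖x‖ + u * ‖z‖ := by
    calc ‖w‖ ≤ ‖t • x‖ + ‖u • z‖ := norm_add_le _ _
      _ = t * ‖x‖ + u * ‖z‖ := by
          rw [norm_smul, norm_smul, Real.norm_eq_abs, Real.norm_eq_abs,
            abs_of_nonneg ht, abs_of_nonneg hu]
  have hrpow : ‖w‖ ^ ρ ≤ t * ‖x‖ ^ ρ + u * ‖z‖ ^ ρ := by
    have h1 : ‖w‖ ^ ρ ≤ (t * ‖x‖ + u * ‖z‖) ^ ρ :=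
      Real.rpow_le_rpow (norm_nonneg _) hwr (by linarith)
    have h2 := (convexOn_rpow (by linarith : (1:ℝ) ≤ ρ)).2
      (Set.mem_Ici.mpr (norm_nonneg x)) (Set.mem_Ici.mpr (norm_nonneg z)) ht hu htu
    simp only [smul_eq_mul] at h2
    exact le_trans h1 h2
  have hsq := normsq_combo x z htu
  have eC : C * ‖w‖^(2:ℕ)
      = C * (t * ‖x‖^(2:ℕ)) + C * (u * ‖z‖^(2:ℕ)) - C * (t * u * ‖x - z‖^(2:ℕ)) := by
    rw [hwdef, hsq]; ring
  have hCrpow := mul_le_mul_of_nonneg_left hrpow hC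
  show ψ w + C * (‖w‖ ^ (2:ℕ) + ‖w‖ ^ ρ)
      ≤ t • (ψ x + C * (‖x‖ ^ (2:ℕ) + ‖x‖ ^ ρ)) + u • (ψ z + C * (‖z‖ ^ (2:ℕ) + ‖z‖ ^ ρ))
  simp only [smul_eq_mul]
  nlinarith [hψw, eC, hCrpow]
end

section
/- Fix T > 0, β > 1, and for N ≥ 1 let t_i = (i/N)^β T for 0 ≤ i ≤ N and τ_s = t_i for s ∈ [t_i, t_{i+1}). Then there exists a finite constant C (depending on T, β) such that for all N ≥ 1, ∫₀^T min((s-τ_s)²/s + 1/N², s-τ_s) ds ≤ C/N². -/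
open MeasureTheory Set intervalIntegral

lemma aux_mvt {β : ℝ} (hβ : 1 ≤ β) {x : ℝ} (hx : 0 ≤ x) :
    (x+1)^β - x^β ≤ β * (x+1)^(β-1) := by
  have hcont : Continuous (fun y : ℝ => y ^ β) := by
    refine continuous_iff_continuousAt.2 fun y => ?_
    exact (Real.hasDerivAt_rpow_const (Or.inr hβ)).continuousAt
  obtain ⟨c, hc, hc'⟩ := exists_hasDerivAt_eq_slope (fun y : ℝ => y ^ β)
      (fun y : ℝ => β * y ^ (β - 1)) (by linarith : x < x+1)
      hcont.continuousOn
      (fun y _ => Real.hasDerivAt_rpow_const (Or.inr hβ))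
  have h1 : x + 1 - x = 1 := by ring
  rw [h1, div_one] at hc'
  rw [← hc']
  have hcpos : 0 ≤ c := le_trans hx hc.1.le
  have : c ^ (β - 1) ≤ (x+1) ^ (β-1) :=
    Real.rpow_le_rpow hcpos hc.2.le (by linarith)
  exact mul_le_mul_of_nonneg_left this (by linarith)

set_option maxHeartbeats 1000000 in
lemma aux_key {T β : ℝ} (hT : 0 < T) (hβ : 1 < β) {n a : ℝ} (ha : 1 ≤ a) (han : a + 1 ≤ n)
    {s : ℝ} (hs1 : (a/n)^β * T ≤ s) (hs2 : s ≤ ((a+1)/n)^β * T) :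
    (s - (a/n)^β * T)^2 / s ≤ β^2 * (2:ℝ)^(3*β) * T^(2/β) * s^(1 - 2/β) / n^(2:ℝ) := by
  have hβ0 : (0:ℝ) < β := by linarith
  have hn0 : (0:ℝ) < n := by linarith
  have ha0 : (0:ℝ) < a := by linarith
  have ha1 : (0:ℝ) < a + 1 := by linarith
  set γ : ℝ := 1 - 2/β with hγdef
  have hγβ : β * γ = β - 2 := by rw [hγdef]; field_simp
  have hγ1 : -1 < γ := by
    have h2β : 2/β < 2 := by rw [div_lt_iff₀ hβ0]; nlinarith
    simp only [hγdef]; linarith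
  set tk : ℝ := (a/n)^β * T with htkdef
  set tk1 : ℝ := ((a+1)/n)^β * T with htk1def
  have htk : 0 < tk := mul_pos (Real.rpow_pos_of_pos (div_pos ha0 hn0) β) hT
  have hspos : 0 < s := lt_of_lt_of_le htk hs1
  have htkle : tk ≤ tk1 := by
    have : (a/n)^β ≤ ((a+1)/n)^β :=
      Real.rpow_le_rpow (by positivity) (by gcongr; linarith) hβ0.le
    exact mul_le_mul_of_nonneg_right this hT.le
  -- step 1
  have step1 : (s - tk)^2 / s ≤ (tk1 - tk)^2 / tk := by
    apply div_le_div₀ (sq_nonneg _) _ htk hs1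
    have h1 : 0 ≤ s - tk := by linarith
    have h2 : s - tk ≤ tk1 - tk := by linarith
    nlinarith
  -- gap bound
  have hmvt : (a+1)^β - a^β ≤ β * (a+1)^(β-1) := aux_mvt hβ.le ha0.le
  have h3 : (a+1)^(β-1) ≤ 2^(β-1) * a^(β-1) := by
    have h31 : (a+1)^(β-1) ≤ (2*a)^(β-1) :=
      Real.rpow_le_rpow ha1.le (by linarith) (by linarith)
    rwa [Real.mul_rpow (by norm_num) ha0.le] at h31
  have gap : tk1 - tk ≤ β * T * (2^(β-1) * a^(β-1)) / n^β := by
    have e : tk1 - tk = T * ((a+1)^β - a^β) / n^β := by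
      rw [htkdef, htk1def, Real.div_rpow ha1.le hn0.le, Real.div_rpow ha0.le hn0.le]
      ring
    rw [e, div_le_div_iff₀ (Real.rpow_pos_of_pos hn0 β) (Real.rpow_pos_of_pos hn0 β)]
    have h4 : 0 ≤ a^(β-1) := Real.rpow_nonneg ha0.le _
    have h5 : 0 ≤ (2:ℝ)^(β-1) := Real.rpow_nonneg (by norm_num) _
    have h6 : 0 < n^β := Real.rpow_pos_of_pos hn0 β
    nlinarith [mul_le_mul_of_nonneg_left hmvt hT.le,
      mul_le_mul_of_nonneg_left h3 (mul_pos hβ0 hT).le]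
  have hgap0 : 0 ≤ tk1 - tk := by linarith
  have step2 : (tk1 - tk)^2 / tk ≤ (β * T * (2^(β-1) * a^(β-1)) / n^β)^2 / tk := by
    gcongr
  -- algebraic simplification
  have e2 : (β * T * (2^(β-1) * a^(β-1)) / n^β)^2 / tk
      = β^2 * T * (2:ℝ)^(2*β-2) * a^(β-2) / n^β := by
    have e21 : ((2:ℝ)^(β-1))^2 = (2:ℝ)^(2*β-2) := by
      rw [sq, ← Real.rpow_add (by norm_num : (0:ℝ) < 2)]; ring_nf
    have e22 : (a^(β-1))^2 = a^(β-2) * a^β := by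
      rw [sq, ← Real.rpow_add ha0, ← Real.rpow_add ha0]; ring_nf
    have e23 : (n^β)^2 = n^β * n^β := sq (n^β) ▸ rfl
    have haβ : (0:ℝ) < a^β := Real.rpow_pos_of_pos ha0 β
    have hnβ : (0:ℝ) < n^β := Real.rpow_pos_of_pos hn0 β
    have hT' := hT.ne'
    have haβ' := haβ.ne'
    have hnβ' := hnβ.ne'
    rw [htkdef, Real.div_rpow ha0.le hn0.le, div_pow, mul_pow, mul_pow, mul_pow, e21, e22,
      sq (n^β)]
    field_simp
  -- step 4: a^(β-2)/n^β = (a/n)^(β-2)/n^2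
  have hnβ2 : (0:ℝ) < n^(β-2) := Real.rpow_pos_of_pos hn0 _
  have hn2 : (0:ℝ) < n^(2:ℝ) := Real.rpow_pos_of_pos hn0 _
  have e4 : a^(β-2) / n^β = (a/n)^(β-2) / n^(2:ℝ) := by
    rw [Real.div_rpow ha0.le hn0.le,
      show n^β = n^(β-2) * n^(2:ℝ) by rw [← Real.rpow_add hn0]; ring_nf]
    field_simp
  have hTγ : (0:ℝ) < T^γ := Real.rpow_pos_of_pos hT γ
  have e5 : (a/n)^(β-2) = tk^γ / T^γ := by
    have e51 : (a/n)^(β-2) = ((a/n)^β)^γ := by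
      rw [← Real.rpow_mul (by positivity : (0:ℝ) ≤ a/n), hγβ]
    have e52 : (a/n)^β = tk / T := by rw [htkdef]; field_simp
    rw [e51, e52, Real.div_rpow htk.le hT.le]
  -- step 7
  have hsγ : 0 ≤ s^γ := Real.rpow_nonneg hspos.le _
  have h2β : (0:ℝ) < (2:ℝ)^β := Real.rpow_pos_of_pos two_pos β
  have step7 : tk^γ ≤ 2^β * s^γ := by
    rcases le_or_gt 0 γ with hγ0 | hγ0
    · have h71 : tk^γ ≤ s^γ := Real.rpow_le_rpow htk.le hs1 hγ0
      have h72 : (1:ℝ) ≤ 2^β := by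
        have := Real.rpow_le_rpow_of_exponent_le one_le_two hβ0.le
        simpa using this
      calc tk^γ ≤ s^γ := h71
        _ = 1 * s^γ := (one_mul _).symm
        _ ≤ 2^β * s^γ := mul_le_mul_of_nonneg_right h72 hsγ
    · have htk12 : tk1 ≤ 2^β * tk := by
        have h73 : ((a+1)/n)^β ≤ (2*(a/n))^β :=
          Real.rpow_le_rpow (by positivity)
            (by rw [← mul_div_assoc]; gcongr ?_ / n; linarith) hβ0.le
        rw [Real.mul_rpow (by norm_num) (by positivity)] at h73
        calc tk1 = ((a+1)/n)^β * T := htk1def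
          _ ≤ 2^β * (a/n)^β * T := mul_le_mul_of_nonneg_right h73 hT.le
          _ = 2^β * tk := by rw [htkdef]; ring
      have hsle : s ≤ 2^β * tk := le_trans hs2 htk12
      have h8 : (2^β * tk)^γ ≤ s^γ := Real.rpow_le_rpow_of_nonpos hspos hsle hγ0.le
      rw [Real.mul_rpow h2β.le htk.le] at h8
      have h2γ : (0:ℝ) < ((2:ℝ)^β)^γ := Real.rpow_pos_of_pos h2β γ
      have h9 : tk^γ ≤ s^γ / (2^β)^γ := by
        rw [le_div_iff₀ h2γ, mul_comm]; exact h8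
      have h10 : s^γ / (2^β)^γ = s^γ * (2^β)^(-γ) := by
        rw [Real.rpow_neg h2β.le]; ring
      have h11 : ((2:ℝ)^β)^(-γ) ≤ 2^β := by
        rw [← Real.rpow_mul (by norm_num : (0:ℝ) ≤ 2)]
        exact Real.rpow_le_rpow_of_exponent_le one_le_two (by nlinarith)
      calc tk^γ ≤ s^γ / (2^β)^γ := h9
        _ = s^γ * (2^β)^(-γ) := h10
        _ ≤ s^γ * 2^β := mul_le_mul_of_nonneg_left h11 hsγ
        _ = 2^β * s^γ := mul_comm _ _
  -- assemble
  have hsγ2 : 0 ≤ T^(2/β) := Real.rpow_nonneg hT.le _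
  calc (s - tk)^2 / s ≤ (tk1 - tk)^2 / tk := step1
    _ ≤ (β * T * (2^(β-1) * a^(β-1)) / n^β)^2 / tk := step2
    _ = β^2 * T * (2:ℝ)^(2*β-2) * a^(β-2) / n^β := e2
    _ = β^2 * T * (2:ℝ)^(2*β-2) * ((a/n)^(β-2)) / n^(2:ℝ) := by
        rw [mul_div_assoc, e4, mul_div_assoc]
    _ = β^2 * T * (2:ℝ)^(2*β-2) * (tk^γ / T^γ) / n^(2:ℝ) := by rw [e5]
    _ ≤ β^2 * T * (2:ℝ)^(2*β-2) * ((2^β * s^γ) / T^γ) / n^(2:ℝ) := by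
        gcongr
    _ = β^2 * (2:ℝ)^(3*β-2) * T^(2/β) * s^γ / n^(2:ℝ) := by
        have e6 : (2:ℝ)^(2*β-2) * 2^β = (2:ℝ)^(3*β-2) := by
          rw [← Real.rpow_add two_pos]; ring_nf
        have e7 : T^(2/β) = T / T^γ := by
          rw [show (2:ℝ)/β = 1 - γ by simp [hγdef], Real.rpow_sub hT, Real.rpow_one]
        rw [e7, ← e6]
        field_simp
    _ ≤ β^2 * (2:ℝ)^(3*β) * T^(2/β) * s^γ / n^(2:ℝ) := by
        gcongr
        · exact one_le_two
        · linarith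

set_option maxHeartbeats 1000000 in
theorem stmt13 (T β : ℝ) (hT : 0 < T) (hβ : 1 < β) :
    ∃ C : ℝ, ∀ N : ℕ, 1 ≤ N → ∀ τ : ℝ → ℝ,
      (∀ i : ℕ, i < N → ∀ s ∈ Set.Ico (((i : ℝ) / N) ^ β * T) ((((i : ℝ) + 1) / N) ^ β * T),
        τ s = ((i : ℝ) / N) ^ β * T) →
      ∫ s in (0 : ℝ)..T, min ((s - τ s) ^ 2 / s + 1 / (N : ℝ) ^ 2) (s - τ s) ≤ C / (N : ℝ) ^ 2 := by
  have hβ0 : (0:ℝ) < β := by linarith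
  have hγ1 : -1 < 1 - 2/β := by
    have : 2/β < 2 := by rw [div_lt_iff₀ hβ0]; nlinarith
    linarith
  set K : ℝ := β^2 * (2:ℝ)^(3*β) * T^(2/β) with hK
  have hK0 : 0 ≤ K := by positivity
  set G : ℝ → ℝ := fun s => K * s ^ (1 - 2/β) + 1 with hGdef
  have hGint : ∀ a b : ℝ, IntervalIntegrable G volume a b := fun a b =>
    ((intervalIntegral.intervalIntegrable_rpow' hγ1).const_mul K).add intervalIntegrable_const
  refine ⟨T^2/2 + ∫ s in (0:ℝ)..T, G s, ?_⟩
  intro N hN τ hτ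
  have hN0 : (0:ℝ) < N := by exact_mod_cast hN
  have hN1 : (1:ℝ) ≤ N := by exact_mod_cast hN
  have hN2 : (0:ℝ) < (N:ℝ)^2 := by positivity
  set t : ℕ → ℝ := fun i => ((i:ℝ)/N)^β * T with htdef
  set F : ℝ → ℝ := fun s => min ((s - τ s)^2 / s + 1/(N:ℝ)^2) (s - τ s) with hFdef
  have ht0 : t 0 = 0 := by simp [htdef, Real.zero_rpow (by linarith : β ≠ 0)]
  have htN : t N = T := by simp [htdef, div_self hN0.ne', Real.one_rpow]
  have htnn : ∀ i : ℕ, 0 ≤ t i := fun i => by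
    simp only [htdef]
    positivity
  have htpos : ∀ i : ℕ, 1 ≤ i → 0 < t i := fun i hi => by
    have h1 : (0:ℝ) < (i:ℝ)/N := div_pos (by exact_mod_cast hi) hN0
    exact mul_pos (Real.rpow_pos_of_pos h1 β) hT
  have htmono : ∀ i j : ℕ, i ≤ j → t i ≤ t j := fun i j hij => by
    have hc : (i:ℝ) ≤ (j:ℝ) := Nat.cast_le.mpr hij
    have h1 : ((i:ℝ)/N)^β ≤ ((j:ℝ)/N)^β :=
      Real.rpow_le_rpow (by positivity) (by gcongr) hβ0.le
    exact mul_le_mul_of_nonneg_right h1 hT.le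
  have hτ' : ∀ i : ℕ, i < N → ∀ s ∈ Set.Ico (t i) (t (i+1)), τ s = t i := by
    intro i hi s hs
    have hcast : ((i+1 : ℕ):ℝ) = (i:ℝ) + 1 := by push_cast; ring
    have hs' : s ∈ Set.Ico (((i:ℝ)/N)^β*T) ((((i:ℝ)+1)/N)^β*T) := by
      simpa only [htdef, hcast] using hs
    simpa only [htdef] using hτ i hi s hs'
  set g : ℕ → ℝ → ℝ := fun i s => min ((s - t i)^2 / s + 1/(N:ℝ)^2) (s - t i) with hgdef
  have hae : ∀ i : ℕ, i < N →
      ∀ᵐ s ∂(volume : Measure ℝ), s ∈ Set.Ioc (t i) (t (i+1)) → F s = g i s := by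
    intro i hi
    have hne : ∀ᵐ s : ℝ ∂volume, s ≠ t (i+1) := by
      rw [ae_iff]
      simp only [not_not, Set.setOf_eq_eq_singleton]
      exact measure_singleton _
    filter_upwards [hne] with s hsne hmem
    have hmem' : s ∈ Set.Ico (t i) (t (i+1)) := ⟨hmem.1.le, lt_of_le_of_ne hmem.2 hsne⟩
    simp only [hFdef, hgdef, hτ' i hi s hmem']
  have hg0 : ∀ᵐ s ∂(volume : Measure ℝ), s ∈ Set.Ioc (t 0) (t 1) → F s = s := by
    filter_upwards [hae 0 (by omega)] with s h hmem
    rw [h hmem]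
    have hs0 : 0 < s := by rw [ht0] at hmem; exact hmem.1
    simp only [hgdef, ht0, sub_zero]
    rw [show s^2/s = s by rw [sq, mul_div_assoc, div_self hs0.ne', mul_one]]
    exact min_eq_right (le_add_of_nonneg_right (by positivity))
  have hgcont : ∀ i : ℕ, 1 ≤ i → ContinuousOn (g i) (Set.Icc (t i) (t (i+1))) := by
    intro i hi
    have hpos := htpos i hi
    have c1 : ContinuousOn (fun s : ℝ => (s - t i)^2) (Set.Icc (t i) (t (i+1))) := by fun_prop
    have c2 : ContinuousOn (fun s : ℝ => s) (Set.Icc (t i) (t (i+1))) := by fun_prop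
    have c3 : ContinuousOn (fun s : ℝ => (s - t i)^2 / s) (Set.Icc (t i) (t (i+1))) :=
      c1.div c2 (fun s hs => (lt_of_lt_of_le hpos hs.1).ne')
    have c4 : ContinuousOn (fun s : ℝ => (s - t i)^2 / s + 1/(N:ℝ)^2)
        (Set.Icc (t i) (t (i+1))) := c3.add continuousOn_const
    have c5 : ContinuousOn (fun s : ℝ => s - t i) (Set.Icc (t i) (t (i+1))) := by fun_prop
    exact fun x hx => (c4 x hx).inf (c5 x hx)
  have hFint : ∀ i : ℕ, i < N → IntervalIntegrable F volume (t i) (t (i+1)) := by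
    intro i hi
    have hle := htmono i (i+1) (by omega)
    rcases Nat.eq_zero_or_pos i with rfl | hi1
    · have h1 : IntervalIntegrable (fun s : ℝ => s) volume (t 0) (t 1) :=
        (continuous_id.continuousOn).intervalIntegrable
      apply h1.congr_ae
      rw [uIoc_of_le hle]
      refine (MeasureTheory.ae_restrict_iff' measurableSet_Ioc).2 ?_
      filter_upwards [hg0] with s h hmem
      exact (h hmem).symm
    · have h1 : IntervalIntegrable (g i) volume (t i) (t (i+1)) :=
        (hgcont i hi1).intervalIntegrable_of_Icc hle
      apply h1.congr_ae
      rw [uIoc_of_le hle]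
      refine (MeasureTheory.ae_restrict_iff' measurableSet_Ioc).2 ?_
      filter_upwards [hae i hi] with s h hmem
      exact (h hmem).symm
  have hempty : ∀ i : ℕ, (∀ᵐ s ∂(volume : Measure ℝ),
      s ∈ Set.Ioc (t (i+1)) (t i) → F s = g i s) := by
    intro i
    apply Filter.Eventually.of_forall
    intro s hmem
    rw [Set.Ioc_eq_empty (not_lt.mpr (htmono i (i+1) (by omega)))] at hmem
    exact absurd hmem (Set.notMem_empty s)
  have hpow2 : (N:ℝ)^((2:ℕ):ℝ) = (N:ℝ)^2 := Real.rpow_natCast _ 2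
  have hest0 : (∫ s in (t 0)..(t 1), F s) ≤ T^2/2 / (N:ℝ)^2 := by
    have e : (∫ s in (t 0)..(t 1), F s) = ∫ s in (t 0)..(t 1), s := by
      apply intervalIntegral.integral_congr_ae' hg0
      apply Filter.Eventually.of_forall
      intro s hmem
      rw [Set.Ioc_eq_empty (not_lt.mpr (htmono 0 1 (by omega)))] at hmem
      exact absurd hmem (Set.notMem_empty s)
    rw [e, ht0, integral_id]
    have h1 : t 1 ≤ T / N := by
      have h2 : ((1:ℝ)/N)^β ≤ ((1:ℝ)/N)^(1:ℝ) :=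
        Real.rpow_le_rpow_of_exponent_ge (by positivity)
          (by rw [div_le_one hN0]; exact hN1) hβ.le
      rw [Real.rpow_one] at h2
      calc t 1 = ((1:ℝ)/N)^β * T := by simp [htdef]
        _ ≤ (1/N) * T := mul_le_mul_of_nonneg_right h2 hT.le
        _ = T / N := by ring
    have h2 : 0 ≤ t 1 := htnn 1
    rw [div_div]
    rw [div_le_div_iff₀ (by norm_num) (by positivity)]
    have h3 : t 1 * t 1 ≤ (T/(N:ℝ)) * (T/(N:ℝ)) := mul_le_mul h1 h1 h2 (div_nonneg hT.le hN0.le)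
    have h4 : (T/(N:ℝ)) * (T/(N:ℝ)) * ((N:ℝ)^2) = T^2 := by field_simp
    have h5 := mul_le_mul_of_nonneg_right h3 (by positivity : (0:ℝ) ≤ 2*(N:ℝ)^2)
    nlinarith [h4, h5]
  have hestk : ∀ i : ℕ, 1 ≤ i → i + 1 ≤ N →
      (∫ s in t i..t (i+1), F s) ≤ (∫ s in t i..t (i+1), G s) / (N:ℝ)^2 := by
    intro i hi1 hiN
    have hle := htmono i (i+1) (by omega)
    have e : (∫ s in t i..t (i+1), F s) = ∫ s in t i..t (i+1), g i s :=
      intervalIntegral.integral_congr_ae' (hae i (by omega)) (hempty i)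
    rw [e, ← intervalIntegral.integral_div]
    apply intervalIntegral.integral_mono_on hle
      ((hgcont i hi1).intervalIntegrable_of_Icc hle) ((hGint _ _).div_const _)
    intro s hs
    have hcast : ((i+1 : ℕ):ℝ) = (i:ℝ) + 1 := by push_cast; ring
    have hs1 : ((i:ℝ)/N)^β * T ≤ s := hs.1
    have hs2 : s ≤ (((i:ℝ)+1)/N)^β * T := by
      have := hs.2
      simpa only [htdef, hcast] using this
    have key := aux_key hT hβ (n := (N:ℝ)) (a := (i:ℝ))
      (by exact_mod_cast hi1) (by exact_mod_cast hiN) hs1 hs2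
    rw [show ((2:ℝ)) = ((2:ℕ):ℝ) by norm_num, hpow2] at key
    have hmin : g i s ≤ (s - t i)^2 / s + 1/(N:ℝ)^2 := min_le_left _ _
    have hGs : G s / (N:ℝ)^2 = K * s^(1-2/β) / (N:ℝ)^2 + 1/(N:ℝ)^2 := by
      rw [hGdef]; ring
    rw [hGs]
    have : (s - t i)^2/s ≤ K * s^(1-2/β) / (N:ℝ)^2 := key
    linarith
  have hsplit : (∫ s in (0:ℝ)..T, F s) = ∑ i ∈ Finset.range N, ∫ s in t i..t (i+1), F s := by
    rw [intervalIntegral.sum_integral_adjacent_intervals (fun k hk => hFint k hk), ht0, htN]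
  obtain ⟨M, rfl⟩ : ∃ M, N = M + 1 := ⟨N - 1, by omega⟩
  rw [hsplit, Finset.sum_range_succ']
  have hsum : ∑ i ∈ Finset.range M, (∫ s in t (i+1)..t (i+1+1), F s)
      ≤ ∑ i ∈ Finset.range M, (∫ s in t (i+1)..t (i+1+1), G s) / ((M+1:ℕ):ℝ)^2 :=
    Finset.sum_le_sum (fun i hi => hestk (i+1) (by omega) (by have := Finset.mem_range.mp hi; omega))
  have hsum2 : ∑ i ∈ Finset.range M, (∫ s in t (i+1)..t (i+1+1), G s)
      = ∫ s in (t 1)..(t (M+1)), G s := by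
    exact intervalIntegral.sum_integral_adjacent_intervals
      (a := fun i => t (i+1)) (μ := volume) (f := G) (fun k _ => hGint _ _)
  have hsum3 : (∫ s in (t 1)..(t (M+1)), G s) ≤ ∫ s in (0:ℝ)..T, G s := by
    apply intervalIntegral.integral_mono_interval (htnn 1)
      (htmono 1 (M+1) (by omega)) htN.le ?_ (hGint 0 T)
    refine (MeasureTheory.ae_restrict_iff' measurableSet_Ioc).2 ?_
    apply Filter.Eventually.of_forall
    intro s hs
    have h1 : 0 ≤ s^(1-2/β) := Real.rpow_nonneg hs.1.le _
    simp only [hGdef, Pi.zero_apply]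
    nlinarith [mul_nonneg hK0 h1]
  calc (∑ i ∈ Finset.range M, ∫ s in t (i+1)..t (i+1+1), F s) + ∫ s in (t 0)..(t (0+1)), F s
      ≤ (∑ i ∈ Finset.range M, (∫ s in t (i+1)..t (i+1+1), G s) / ((M+1:ℕ):ℝ)^2)
        + T^2/2 / ((M+1:ℕ):ℝ)^2 := add_le_add hsum hest0
    _ = ((∫ s in (t 1)..(t (M+1)), G s) + T^2/2) / ((M+1:ℕ):ℝ)^2 := by
        rw [← Finset.sum_div, hsum2, add_div]
    _ ≤ ((∫ s in (0:ℝ)..T, G s) + T^2/2) / ((M+1:ℕ):ℝ)^2 := by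
        gcongr
    _ = (T^2/2 + ∫ s in (0:ℝ)..T, G s) / ((M+1:ℕ):ℝ)^2 := by ring
end
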